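/- Let G_{m,n,k} be the split metacyclic group, where k has multiplicative order α modulo n. For every g ∈ G_{m,n,k}, there exist an integer t with 1 ≤ t ≤ α and integers a₁,…,a_t, b₁,…,b_t such that g = x^{a₁}y^{b₁}x^{a₂}y^{b₂}⋯x^{a_t}y^{b_t} and Σ_{i=1}^t (|a_i| + |b_i|) = ‖g‖, where ‖g‖ is the word norm of g with respect to {x, x⁻¹, y, y⁻¹}. In other words, every element admits a geodesic representation with at most α syllables. -/

import Mathlib

/-- Relators of the split metacyclic group `⟨x, y | x^m = y^n = 1, x⁻¹yx = y^k⟩`,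
with generator `0` playing the role of `x` and `1` that of `y`. -/
def metacyclicRels (m n k : ℕ) : Set (FreeGroup (Fin 2)) :=
  { FreeGroup.of 0 ^ m, FreeGroup.of 1 ^ n,
    (FreeGroup.of 0)⁻¹ * FreeGroup.of 1 * FreeGroup.of 0 * (FreeGroup.of 1 ^ k)⁻¹ }

/-- The split metacyclic group `G_{m,n,k} = ℤ_m ⋉_k ℤ_n
  = ⟨x, y | x^m = y^n = 1, x⁻¹yx = y^k⟩`. -/
abbrev SplitMetacyclic (m n k : ℕ) : Type := PresentedGroup (metacyclicRels m n k)

/-- The generator `x` of `G_{m,n,k}`. -/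
def xgen (m n k : ℕ) : SplitMetacyclic m n k := PresentedGroup.of 0

/-- The generator `y` of `G_{m,n,k}`. -/
def ygen (m n k : ℕ) : SplitMetacyclic m n k := PresentedGroup.of 1

/-- The word norm of `g` with respect to a set `S` of generators:
the least `t` such that `g` is a product of `t` elements of `S`. -/
noncomputable def wordNorm {G : Type*} [Group G] (S : Set G) (g : G) : ℕ :=
  sInf { t | ∃ w : List G, (∀ u ∈ w, u ∈ S) ∧ w.length = t ∧ w.prod = g }

/-- The diameter of a group with respect to a set `S` of generators. -/
noncomputable def diam {G : Type*} [Group G] (S : Set G) : ℕ :=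
  ⨆ g : G, wordNorm S g

/-- The generating set `{x, x⁻¹, y, y⁻¹}` of `G_{m,n,k}`. -/
def genSet (m n k : ℕ) : Set (SplitMetacyclic m n k) :=
  {xgen m n k, (xgen m n k)⁻¹, ygen m n k, (ygen m n k)⁻¹}

namespace MetaAux

variable (m n k : ℕ)

/-- product of a syllable list -/
def sylProd (l : List (ℤ × ℤ)) : SplitMetacyclic m n k :=
  (l.map fun p => xgen m n k ^ p.1 * ygen m n k ^ p.2).prod

/-- weight of a syllable list -/
def sylWt (l : List (ℤ × ℤ)) : ℕ := (l.map fun p => p.1.natAbs + p.2.natAbs).sum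

/-- sum of x-exponents -/
def sylA (l : List (ℤ × ℤ)) : ℤ := (l.map Prod.fst).sum

@[simp] lemma sylProd_nil : sylProd m n k [] = 1 := rfl

@[simp] lemma sylProd_cons (p : ℤ × ℤ) (l : List (ℤ × ℤ)) :
    sylProd m n k (p :: l) = xgen m n k ^ p.1 * ygen m n k ^ p.2 * sylProd m n k l := by
  simp [sylProd]

@[simp] lemma sylProd_append (l₁ l₂ : List (ℤ × ℤ)) :
    sylProd m n k (l₁ ++ l₂) = sylProd m n k l₁ * sylProd m n k l₂ := by
  simp [sylProd]

@[simp] lemma sylWt_nil : sylWt [] = 0 := rfl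

@[simp] lemma sylWt_cons (p : ℤ × ℤ) (l : List (ℤ × ℤ)) :
    sylWt (p :: l) = p.1.natAbs + p.2.natAbs + sylWt l := by simp [sylWt]

@[simp] lemma sylWt_append (l₁ l₂ : List (ℤ × ℤ)) :
    sylWt (l₁ ++ l₂) = sylWt l₁ + sylWt l₂ := by simp [sylWt]

@[simp] lemma sylA_nil : sylA [] = 0 := rfl

@[simp] lemma sylA_cons (p : ℤ × ℤ) (l : List (ℤ × ℤ)) :
    sylA (p :: l) = p.1 + sylA l := by simp [sylA]

@[simp] lemma sylA_append (l₁ l₂ : List (ℤ × ℤ)) :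
    sylA (l₁ ++ l₂) = sylA l₁ + sylA l₂ := by simp [sylA]

lemma rel_mk {r : FreeGroup (Fin 2)} (h : r ∈ metacyclicRels m n k) :
    (QuotientGroup.mk r : SplitMetacyclic m n k) = 1 :=
  (QuotientGroup.eq_one_iff r).mpr (Subgroup.subset_normalClosure h)

lemma x_pow_m : xgen m n k ^ m = 1 := by
  have h := rel_mk m n k (r := FreeGroup.of 0 ^ m) (by simp [metacyclicRels])
  have : (QuotientGroup.mk (FreeGroup.of 0 ^ m) : SplitMetacyclic m n k)
      = xgen m n k ^ m := by
    exact map_pow (QuotientGroup.mk' _) (FreeGroup.of 0) m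
  rwa [this] at h

lemma y_pow_n : ygen m n k ^ n = 1 := by
  have h := rel_mk m n k (r := FreeGroup.of 1 ^ n) (by simp [metacyclicRels])
  have : (QuotientGroup.mk (FreeGroup.of 1 ^ n) : SplitMetacyclic m n k)
      = ygen m n k ^ n := by
    exact map_pow (QuotientGroup.mk' _) (FreeGroup.of 1) n
  rwa [this] at h

lemma conj_rel : (xgen m n k)⁻¹ * ygen m n k * xgen m n k = ygen m n k ^ k := by
  have h := rel_mk m n k
    (r := (FreeGroup.of 0)⁻¹ * FreeGroup.of 1 * FreeGroup.of 0 * (FreeGroup.of 1 ^ k)⁻¹)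
    (by simp [metacyclicRels])
  have h2 : (QuotientGroup.mk ((FreeGroup.of 0)⁻¹ * FreeGroup.of 1 * FreeGroup.of 0 *
      (FreeGroup.of 1 ^ k)⁻¹) : SplitMetacyclic m n k)
      = (xgen m n k)⁻¹ * ygen m n k * xgen m n k * (ygen m n k ^ k)⁻¹ := by
    have := map_mul (QuotientGroup.mk' (Subgroup.normalClosure (metacyclicRels m n k)))
    simp only [QuotientGroup.mk_mul, QuotientGroup.mk_inv, QuotientGroup.mk_pow]
    rfl
  rw [h2] at h
  exact mul_inv_eq_one.mp h

lemma y_pow_modeq {a b : ℕ} (h : a ≡ b [MOD n]) : ygen m n k ^ a = ygen m n k ^ b := by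
  have hd : orderOf (ygen m n k) ∣ n := orderOf_dvd_of_pow_eq_one (y_pow_n m n k)
  exact (pow_eq_pow_iff_modEq).mpr (h.of_dvd hd)

lemma x_zpow_reduce (hm : 0 < m) (S : ℤ) : ∃ j : ℕ, xgen m n k ^ S = xgen m n k ^ j := by
  refine ⟨(S % m).toNat, ?_⟩
  have hm' : (m : ℤ) ≠ 0 := by exact_mod_cast hm.ne'
  have h0 : (0 : ℤ) ≤ S % m := Int.emod_nonneg S hm'
  have hS : S = (m : ℤ) * (S / m) + S % m := (Int.mul_ediv_add_emod S m).symm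
  calc xgen m n k ^ S = xgen m n k ^ ((m : ℤ) * (S / m) + S % m) := by rw [← hS]
    _ = (xgen m n k ^ (m : ℤ)) ^ (S / m) * xgen m n k ^ (S % m) := by
        rw [zpow_add, zpow_mul]
    _ = xgen m n k ^ (S % m) := by
        rw [zpow_natCast, x_pow_m, one_zpow, one_mul]
    _ = xgen m n k ^ ((S % m).toNat : ℤ) := by rw [Int.toNat_of_nonneg h0]
    _ = xgen m n k ^ (S % m).toNat := zpow_natCast _ _

lemma conj_x_pow_nat (j : ℕ) :
    (xgen m n k ^ j)⁻¹ * ygen m n k * xgen m n k ^ j = ygen m n k ^ (k ^ j) := by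
  induction j with
  | zero => simp
  | succ j ih =>
    have : (xgen m n k ^ (j+1))⁻¹ * ygen m n k * xgen m n k ^ (j+1)
        = (xgen m n k ^ j)⁻¹ * ((xgen m n k)⁻¹ * ygen m n k * xgen m n k) * xgen m n k ^ j := by
      group
    rw [this, conj_rel]
    have hc := conj_pow (i := k) (a := (xgen m n k ^ j)⁻¹) (b := ygen m n k)
    rw [inv_inv] at hc
    rw [← hc, ih, ← pow_mul, ← pow_succ]

lemma conj_zpow' (hm : 0 < m) (S b : ℤ) :
    ∃ c : ℕ, (xgen m n k ^ S)⁻¹ * ygen m n k ^ b * xgen m n k ^ S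
      = ygen m n k ^ ((c : ℤ) * b) := by
  obtain ⟨j, hj⟩ := x_zpow_reduce m n k hm S
  refine ⟨k ^ j, ?_⟩
  rw [hj]
  have hc := conj_zpow (i := b) (a := (xgen m n k ^ j)⁻¹) (b := ygen m n k)
  rw [inv_inv] at hc
  rw [← hc, conj_x_pow_nat, ← zpow_natCast, ← zpow_mul]

lemma key (hm : 0 < m) (l : List (ℤ × ℤ)) :
    ∃ C : ℤ, sylProd m n k l = xgen m n k ^ sylA l * ygen m n k ^ C := by
  induction l with
  | nil => exact ⟨0, by simp⟩
  | cons p l ih =>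
    obtain ⟨C, hC⟩ := ih
    obtain ⟨c, hc⟩ := conj_zpow' m n k hm (sylA l) p.2
    refine ⟨(c : ℤ) * p.2 + C, ?_⟩
    rw [sylProd_cons, hC, sylA_cons]
    have hcomm : ygen m n k ^ p.2 * xgen m n k ^ sylA l
        = xgen m n k ^ sylA l * ygen m n k ^ ((c : ℤ) * p.2) := by
      conv_rhs => rw [← hc]
      group
    calc xgen m n k ^ p.1 * ygen m n k ^ p.2 * (xgen m n k ^ sylA l * ygen m n k ^ C)
        = xgen m n k ^ p.1 * (ygen m n k ^ p.2 * xgen m n k ^ sylA l) * ygen m n k ^ C := by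
          group
      _ = xgen m n k ^ p.1 * (xgen m n k ^ sylA l * ygen m n k ^ ((c:ℤ) * p.2)) *
            ygen m n k ^ C := by rw [hcomm]
      _ = xgen m n k ^ (p.1 + sylA l) * ygen m n k ^ ((c:ℤ) * p.2 + C) := by
            rw [zpow_add, zpow_add]; group

variable {α : ℕ}

lemma commute_x_alpha (hkα : k ^ α ≡ 1 [MOD n]) :
    Commute (xgen m n k ^ (α : ℤ)) (ygen m n k) := by
  have h : (xgen m n k ^ α)⁻¹ * ygen m n k * xgen m n k ^ α = ygen m n k := by
    rw [conj_x_pow_nat, y_pow_modeq m n k hkα, pow_one]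
  have h2 : ygen m n k * xgen m n k ^ α = xgen m n k ^ α * ygen m n k := by
    have h3 := congrArg (fun z => xgen m n k ^ α * z) h
    simpa [mul_assoc] using h3
  rw [zpow_natCast]
  exact h2.symm

lemma commute_dvd (hkα : k ^ α ≡ 1 [MOD n]) (S b : ℤ) (hd : (α : ℤ) ∣ S) :
    Commute (xgen m n k ^ S) (ygen m n k ^ b) := by
  obtain ⟨c, rfl⟩ := hd
  rw [zpow_mul]
  exact (commute_x_alpha m n k hkα).zpow_zpow c b

lemma comm_mid (hm : 0 < m) (hkα : k ^ α ≡ 1 [MOD n]) (C : List (ℤ × ℤ)) (e b : ℤ)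
    (h : (α : ℤ) ∣ sylA C + e) :
    Commute (ygen m n k ^ b) (sylProd m n k C * xgen m n k ^ e) := by
  have h1 : sylProd m n k C * xgen m n k ^ e = sylProd m n k (C ++ [(e, 0)]) := by
    simp
  obtain ⟨C', hC'⟩ := key m n k hm (C ++ [(e, 0)])
  have h2 : sylA (C ++ [(e, 0)]) = sylA C + e := by simp
  rw [h1, hC', h2]
  exact Commute.mul_right ((commute_dvd m n k hkα _ b h).symm)
    ((Commute.refl (ygen m n k)).zpow_zpow b C')

lemma merge_mid (hm : 0 < m) (hkα : k ^ α ≡ 1 [MOD n]) (C : List (ℤ × ℤ)) (p q : ℤ × ℤ)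
    (h : (α : ℤ) ∣ sylA C + q.1) :
    ∃ M : List (ℤ × ℤ),
      sylProd m n k M = xgen m n k ^ p.1 * ygen m n k ^ p.2 * sylProd m n k (C ++ [q]) ∧
      sylWt M ≤ (p.1.natAbs + p.2.natAbs) + sylWt (C ++ [q]) ∧
      M.length = C.length + 1 := by
  have hcomm := comm_mid m n k hm hkα C q.1 p.2 h
  have hmain : xgen m n k ^ p.1 * ygen m n k ^ p.2 * sylProd m n k (C ++ [q])
      = xgen m n k ^ p.1 * (sylProd m n k C * xgen m n k ^ q.1) *
        ygen m n k ^ (p.2 + q.2) := by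
    have h1 : sylProd m n k (C ++ [q]) = sylProd m n k C * (xgen m n k ^ q.1 *
        ygen m n k ^ q.2) := by simp
    rw [h1, zpow_add]
    calc xgen m n k ^ p.1 * ygen m n k ^ p.2 *
          (sylProd m n k C * (xgen m n k ^ q.1 * ygen m n k ^ q.2))
        = xgen m n k ^ p.1 * (ygen m n k ^ p.2 * (sylProd m n k C * xgen m n k ^ q.1)) *
            ygen m n k ^ q.2 := by group
      _ = xgen m n k ^ p.1 * ((sylProd m n k C * xgen m n k ^ q.1) * ygen m n k ^ p.2) *
            ygen m n k ^ q.2 := by rw [hcomm]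
      _ = xgen m n k ^ p.1 * (sylProd m n k C * xgen m n k ^ q.1) *
            (ygen m n k ^ p.2 * ygen m n k ^ q.2) := by group
  match C with
  | [] =>
    refine ⟨[(p.1 + q.1, p.2 + q.2)], ?_, ?_, rfl⟩
    · rw [hmain]
      simp [zpow_add, mul_assoc]
    · simp [sylWt]
      have := Int.natAbs_add_le p.1 q.1
      have := Int.natAbs_add_le p.2 q.2
      omega
  | c :: Cs =>
    refine ⟨(p.1 + c.1, c.2) :: (Cs ++ [(q.1, p.2 + q.2)]), ?_, ?_, by simp⟩
    · rw [hmain]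
      simp only [sylProd_cons, sylProd_append]
      simp only [sylProd_cons, sylProd_nil, mul_one]
      rw [zpow_add]
      group
    · simp only [sylWt_cons, sylWt_append, sylWt_cons, sylWt_nil]
      have := Int.natAbs_add_le p.1 c.1
      have := Int.natAbs_add_le p.2 q.2
      omega

lemma merge (hm : 0 < m) (hkα : k ^ α ≡ 1 [MOD n]) (hα1 : 1 ≤ α) (l : List (ℤ × ℤ))
    (hlen : α < l.length) :
    ∃ l' : List (ℤ × ℤ), sylProd m n k l' = sylProd m n k l ∧ sylWt l' ≤ sylWt l ∧
      l'.length + 1 = l.length := by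
  haveI : NeZero α := ⟨by omega⟩
  suffices H : ∀ I J : ℕ, I < J → J < l.length →
      ((sylA (l.take (I+1)) : ℤ) : ZMod α) = ((sylA (l.take (J+1)) : ℤ) : ZMod α) →
      ∃ l' : List (ℤ × ℤ), sylProd m n k l' = sylProd m n k l ∧ sylWt l' ≤ sylWt l ∧
        l'.length + 1 = l.length by
    obtain ⟨i, j, hij, hfij⟩ := Fintype.exists_ne_map_eq_of_card_lt
      (fun i : Fin (α+1) => ((sylA (l.take ((i : ℕ)+1)) : ℤ) : ZMod α))
      (by simp [ZMod.card])
    rcases hij.lt_or_gt with h | h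
    · exact H i j h (by omega) hfij
    · exact H j i h (by omega) hfij.symm
  intro I J hIJ hJ hcast
  have hI : I < l.length := by omega
  set A := l.take I with hA
  set p := l[I] with hp
  set C := (l.drop (I+1)).take (J-I-1) with hC
  set q := l[J] with hq
  set D := l.drop (J+1) with hD
  have h1 : l.take (I+1) = A ++ [p] := by
    rw [List.take_succ, hA, hp]
    simp [List.getElem?_eq_getElem hI]
  have h3 : l.drop J = q :: D := List.drop_eq_getElem_cons hJ
  have h2 : l.drop (I+1) = C ++ (q :: D) := by
    rw [← h3, hC]
    have := List.drop_take_append_drop' l (I+1) (J-I-1)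
    rw [show J - I - 1 + (I+1) = J by omega] at this
    exact this.symm
  have hl : l = A ++ p :: (C ++ q :: D) := by
    conv_lhs => rw [← List.take_append_drop (I+1) l]
    rw [h1, h2]
    simp
  have hAlen : A.length = I := by
    rw [hA, List.length_take]; omega
  have hClen : C.length = J - I - 1 := by
    rw [hC, List.length_take, List.length_drop]; omega
  have h4 : l.take (J+1) = A ++ p :: (C ++ [q]) := by
    have hl2 : l = (A ++ p :: (C ++ [q])) ++ D := by
      rw [hl]; simp
    conv_lhs => rw [hl2]
    apply List.take_left'
    simp [hAlen, hClen]
    omega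
  have hdvd : (α : ℤ) ∣ sylA C + q.1 := by
    have hmod := ((ZMod.intCast_eq_intCast_iff _ _ _).mp hcast).dvd
    have he : sylA (l.take (J+1)) - sylA (l.take (I+1)) = sylA C + q.1 := by
      rw [h1, h4]
      simp only [sylA_append, sylA_cons, sylA_nil]
      ring
    rw [he] at hmod
    exact_mod_cast hmod
  obtain ⟨M, hM1, hM2, hM3⟩ := merge_mid m n k hm hkα C p q hdvd
  refine ⟨A ++ (M ++ D), ?_, ?_, ?_⟩
  · have hl3 : l = A ++ (p :: ((C ++ [q]) ++ D)) := by rw [hl]; simp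
    rw [hl3]
    simp only [sylProd_append, sylProd_cons, sylProd_nil, mul_one] at hM1 ⊢
    rw [hM1]
    group
  · have hl3 : l = A ++ (p :: ((C ++ [q]) ++ D)) := by rw [hl]; simp
    rw [hl3]
    simp only [sylWt_append, sylWt_cons, sylWt_nil] at hM2 ⊢
    omega
  · rw [hl]
    simp
    omega

lemma gen_word (z : SplitMetacyclic m n k) (a : ℤ) :
    ∃ w : List (SplitMetacyclic m n k), (∀ u ∈ w, u = z ∨ u = z⁻¹) ∧
      w.length = a.natAbs ∧ w.prod = z ^ a := by
  rcases le_or_gt 0 a with h | h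
  · refine ⟨List.replicate a.toNat z, ?_, ?_, ?_⟩
    · intro u hu
      left
      exact (List.eq_of_mem_replicate hu)
    · simp only [List.length_replicate]; omega
    · rw [List.prod_replicate, ← zpow_natCast, Int.toNat_of_nonneg h]
  · refine ⟨List.replicate a.natAbs z⁻¹, ?_, ?_, ?_⟩
    · intro u hu
      right
      exact (List.eq_of_mem_replicate hu)
    · simp
    · rw [List.prod_replicate, inv_pow, ← zpow_natCast, ← zpow_neg]
      congr 1
      omega

lemma x_mem_genSet : xgen m n k ∈ genSet m n k := by simp [genSet]
lemma xinv_mem_genSet : (xgen m n k)⁻¹ ∈ genSet m n k := by simp [genSet]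
lemma y_mem_genSet : ygen m n k ∈ genSet m n k := by simp [genSet]
lemma yinv_mem_genSet : (ygen m n k)⁻¹ ∈ genSet m n k := by simp [genSet]

lemma syl_to_word (l : List (ℤ × ℤ)) :
    ∃ w : List (SplitMetacyclic m n k), (∀ u ∈ w, u ∈ genSet m n k) ∧
      w.length = sylWt l ∧ w.prod = sylProd m n k l := by
  induction l with
  | nil => exact ⟨[], by simp, by simp, by simp⟩
  | cons p l ih =>
    obtain ⟨w, hw, hwl, hwp⟩ := ih
    obtain ⟨wx, hwx, hwxl, hwxp⟩ := gen_word m n k (xgen m n k) p.1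
    obtain ⟨wy, hwy, hwyl, hwyp⟩ := gen_word m n k (ygen m n k) p.2
    refine ⟨wx ++ wy ++ w, ?_, ?_, ?_⟩
    · intro u hu
      simp only [List.mem_append] at hu
      rcases hu with (hu | hu) | hu
      · rcases hwx u hu with rfl | rfl
        exacts [x_mem_genSet m n k, xinv_mem_genSet m n k]
      · rcases hwy u hu with rfl | rfl
        exacts [y_mem_genSet m n k, yinv_mem_genSet m n k]
      · exact hw u hu
    · simp [hwxl, hwyl, hwl]; omega
    · simp [List.prod_append, hwxp, hwyp, hwp, mul_assoc]

lemma word_to_syl (w : List (SplitMetacyclic m n k)) (hw : ∀ u ∈ w, u ∈ genSet m n k) :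
    ∃ l : List (ℤ × ℤ), sylProd m n k l = w.prod ∧ sylWt l = w.length := by
  induction w with
  | nil => exact ⟨[], by simp, by simp⟩
  | cons u w ih =>
    obtain ⟨l, hl1, hl2⟩ := ih (fun v hv => hw v (List.mem_cons_of_mem u hv))
    have hu := hw u (List.mem_cons_self (a := u) (l := w))
    simp only [genSet, Set.mem_insert_iff, Set.mem_singleton_iff] at hu
    rcases hu with rfl | rfl | rfl | rfl
    · exact ⟨(1, 0) :: l, by simp [hl1], by simp [hl2, Nat.add_comm]⟩
    · exact ⟨(-1, 0) :: l, by simp [hl1], by simp [hl2, Nat.add_comm]⟩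
    · exact ⟨(0, 1) :: l, by simp [hl1], by simp [hl2, Nat.add_comm]⟩
    · exact ⟨(0, -1) :: l, by simp [hl1], by simp [hl2, Nat.add_comm]⟩

lemma norm_set_nonempty (g : SplitMetacyclic m n k) :
    { t | ∃ w : List (SplitMetacyclic m n k),
      (∀ u ∈ w, u ∈ genSet m n k) ∧ w.length = t ∧ w.prod = g }.Nonempty := by
  have htop : Subgroup.closure (genSet m n k) = ⊤ := by
    rw [eq_top_iff, ← PresentedGroup.closure_range_of (metacyclicRels m n k)]
    apply Subgroup.closure_le _ |>.mpr
    rintro _ ⟨i, rfl⟩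
    fin_cases i
    · exact Subgroup.subset_closure (x_mem_genSet m n k)
    · exact Subgroup.subset_closure (y_mem_genSet m n k)
  have hmem : g ∈ Submonoid.closure (genSet m n k ∪ (genSet m n k)⁻¹) := by
    have : g ∈ (Subgroup.closure (genSet m n k)).toSubmonoid := by
      rw [htop]; trivial
    rwa [Subgroup.closure_toSubmonoid] at this
  obtain ⟨w, hw, hwp⟩ := Submonoid.exists_list_of_mem_closure hmem
  refine ⟨w.length, w, ?_, rfl, hwp⟩
  intro u hu
  rcases hw u hu with h | h
  · exact h
  · rw [Set.mem_inv] at h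
    simp only [genSet, Set.mem_insert_iff, Set.mem_singleton_iff] at h ⊢
    rcases h with h | h | h | h
    · right; left; rw [← h, inv_inv]
    · left; rw [inv_eq_iff_eq_inv] at h; exact h.symm ▸ (inv_inv _)
    · right; right; right; rw [← h, inv_inv]
    · right; right; left; rw [inv_eq_iff_eq_inv] at h; exact h.symm ▸ (inv_inv _)

lemma norm_le_wt (g : SplitMetacyclic m n k) (l : List (ℤ × ℤ))
    (h : sylProd m n k l = g) : wordNorm (genSet m n k) g ≤ sylWt l := by
  obtain ⟨w, hw, hwl, hwp⟩ := syl_to_word m n k l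
  exact Nat.sInf_le ⟨w, hw, hwl, hwp.trans h⟩

lemma exists_syl_norm (g : SplitMetacyclic m n k) :
    ∃ l : List (ℤ × ℤ), sylProd m n k l = g ∧ sylWt l = wordNorm (genSet m n k) g := by
  have hmem := Nat.sInf_mem (norm_set_nonempty m n k g)
  obtain ⟨w, hw, hwl, hwp⟩ := hmem
  obtain ⟨l, hl1, hl2⟩ := word_to_syl m n k w hw
  exact ⟨l, hl1.trans hwp, hl2.trans hwl⟩

end MetaAux

/-- Every element of `G_{m,n,k}` admits a geodesic representation
`x^{a₁}y^{b₁}⋯x^{a_t}y^{b_t}` with at most `α = ord(k)` syllables. -/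
theorem geodesic_syllable_bound (m n k : ℕ) (hm : 2 ≤ m) (hn : 3 ≤ n)
    (hk : Nat.Coprime k n) (hkm : k ^ m ≡ 1 [MOD n]) (α : ℕ)
    (hα : orderOf (ZMod.unitOfCoprime k hk) = α)
    (g : SplitMetacyclic m n k) :
    ∃ t : ℕ, 1 ≤ t ∧ t ≤ α ∧ ∃ a b : Fin t → ℤ,
      (List.ofFn fun i => xgen m n k ^ a i * ygen m n k ^ b i).prod = g ∧
      ∑ i, ((a i).natAbs + (b i).natAbs) = wordNorm (genSet m n k) g := by
  classical
  haveI : NeZero n := ⟨by omega⟩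
  have hα1 : 1 ≤ α := by
    rw [← hα]
    exact orderOf_pos _
  have hkα : k ^ α ≡ 1 [MOD n] := by
    have hu : (ZMod.unitOfCoprime k hk) ^ α = 1 := by
      rw [← hα]; exact pow_orderOf_eq_one _
    have hv : ((ZMod.unitOfCoprime k hk : (ZMod n)ˣ) : ZMod n) ^ α = 1 := by
      rw [← Units.val_pow_eq_pow_val, hu, Units.val_one]
    rw [ZMod.coe_unitOfCoprime] at hv
    have h2 : ((k ^ α : ℕ) : ZMod n) = ((1 : ℕ) : ZMod n) := by push_cast; simpa using hv
    exact (ZMod.natCast_eq_natCast_iff _ _ _).mp h2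
  have hm0 : 0 < m := by omega
  set N := wordNorm (genSet m n k) g with hN
  obtain ⟨l0, hl0p, hl0w⟩ := MetaAux.exists_syl_norm m n k g
  set T : Set ℕ := {t | ∃ l : List (ℤ × ℤ), l ≠ [] ∧ l.length = t ∧
      MetaAux.sylProd m n k l = g ∧ MetaAux.sylWt l = N} with hT
  have hTne : T.Nonempty := by
    rcases eq_or_ne l0 [] with rfl | hne
    · refine ⟨1, [(0, 0)], by simp, rfl, ?_, ?_⟩
      · simpa using hl0p
      · simpa using hl0w
    · exact ⟨l0.length, l0, hne, rfl, hl0p, hl0w⟩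
  have hmem := Nat.sInf_mem hTne
  rw [hT] at hmem
  obtain ⟨l, hlne, hlen, hlp, hlw⟩ := hmem
  have hle : l.length ≤ α := by
    by_contra hc
    push_neg at hc
    obtain ⟨l', hp', hw', hlen'⟩ := MetaAux.merge m n k hm0 hkα hα1 l hc
    have hwub : N ≤ MetaAux.sylWt l' := MetaAux.norm_le_wt m n k g l' (hp'.trans hlp)
    have hw'' : MetaAux.sylWt l' = N := le_antisymm (hlw ▸ hw') hwub
    have hne' : l' ≠ [] := by
      intro h
      rw [h] at hlen'
      simp at hlen'
      omega
    have hmem' : l'.length ∈ T := ⟨l', hne', rfl, hp'.trans hlp, hw''⟩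
    have h6 := Nat.sInf_le hmem'
    rw [hT] at h6
    omega
  refine ⟨l.length, ?_, hle, fun i => (l[(i : ℕ)]).1, fun i => (l[(i : ℕ)]).2, ?_, ?_⟩
  · have : 0 < l.length := List.length_pos_iff.mpr hlne
    omega
  · have heq : (List.ofFn fun i : Fin l.length =>
        xgen m n k ^ (l[(i : ℕ)]).1 * ygen m n k ^ (l[(i : ℕ)]).2)
        = l.map (fun p => xgen m n k ^ p.1 * ygen m n k ^ p.2) := by
      conv_rhs => rw [← List.ofFn_getElem (xs := l), List.map_ofFn]
      rfl
    rw [heq]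
    exact hlp
  · have h1 : MetaAux.sylWt l = ((List.ofFn fun i : Fin l.length => l[(i : ℕ)]).map
        fun p => p.1.natAbs + p.2.natAbs).sum := by
      rw [List.ofFn_getElem]
      rfl
    rw [List.map_ofFn, List.sum_ofFn] at h1
    rw [← hlw, h1]
    rfl
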